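/- Let n be prime and let X_{k,l} = E_{k,k+l} - E_{k-l,k} for k ∈ ℤ/nℤ and l ∈ ℤ/nℤ, l ≠ 0 (indices mod n). If complex numbers c_{k,l} satisfy Σ_{k,l} c_{k,l} X_{k,l} = 0, then for each fixed nonzero l, c_{k,l} = c_{0,l} for all k; hence the kernel of the map (c_{k,l}) ↦ Σ c_{k,l} X_{k,l} defined on ℂ^{n×n} (including l = 0, where X_{k,0} = 0) has dimension 2n - 1. -/

import Mathlib

open Matrix

/-- `X k l = E_{k,k+l} - E_{k-l,k}` (note `X k 0 = 0`). -/
noncomputable def Xmat (n : ℕ) [NeZero n] (k l : ZMod n) : Matrix (ZMod n) (ZMod n) ℂ :=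
  single k (k + l) (1 : ℂ) - single (k - l) k (1 : ℂ)

/-- The linear map `(c_{k,l}) ↦ Σ_{k,l} c_{k,l} X_{k,l}`. -/
noncomputable def XmatMap (n : ℕ) [NeZero n] :
    (ZMod n × ZMod n → ℂ) →ₗ[ℂ] Matrix (ZMod n) (ZMod n) ℂ where
  toFun c := ∑ p : ZMod n × ZMod n, c p • Xmat n p.1 p.2
  map_add' c c' := by
    simp [add_smul, Finset.sum_add_distrib]
  map_smul' a c := by
    simp [smul_smul, Finset.smul_sum]

lemma Xmat_sum_apply {n : ℕ} [NeZero n] (c : ZMod n × ZMod n → ℂ) (i j : ZMod n) :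
    (∑ p : ZMod n × ZMod n, c p • Xmat n p.1 p.2) i j = c (i, j - i) - c (j, j - i) := by
  have key : ∀ p : ZMod n × ZMod n, (c p • Xmat n p.1 p.2) i j
      = (if p = (i, j - i) then c p else 0) - (if p = (j, j - i) then c p else 0) := by
    rintro ⟨k, l⟩
    have h1 : ((k, l) = ((i, j - i) : ZMod n × ZMod n)) ↔ (k = i ∧ k + l = j) := by
      rw [Prod.mk.injEq]
      constructor
      · rintro ⟨rfl, rfl⟩; exact ⟨rfl, by ring⟩
      · rintro ⟨rfl, h⟩; exact ⟨rfl, by rw [← h]; ring⟩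
    have h2 : ((k, l) = ((j, j - i) : ZMod n × ZMod n)) ↔ (k - l = i ∧ k = j) := by
      rw [Prod.mk.injEq]
      constructor
      · rintro ⟨rfl, rfl⟩; exact ⟨by ring, rfl⟩
      · rintro ⟨h, rfl⟩; exact ⟨rfl, by rw [← h]; ring⟩
    simp only [Xmat, Matrix.smul_apply, Matrix.sub_apply, Matrix.single, of_apply,
      smul_eq_mul, h1, h2]
    split_ifs <;> ring
  rw [Matrix.sum_apply]
  simp_rw [key]
  rw [Finset.sum_sub_distrib, Finset.sum_ite_eq' Finset.univ, Finset.sum_ite_eq' Finset.univ]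
  simp

lemma constancy {n : ℕ} [NeZero n] (hn : n.Prime) (c : ZMod n × ZMod n → ℂ)
    (hc : (∑ p : ZMod n × ZMod n, c p • Xmat n p.1 p.2) = 0)
    (l : ZMod n) (hl : l ≠ 0) (k : ZMod n) : c (k, l) = c (0, l) := by
  haveI : Fact n.Prime := ⟨hn⟩
  have step : ∀ a : ZMod n, c (a, l) = c (a + l, l) := by
    intro a
    have h := congrFun (congrFun hc a) (a + l)
    rw [Xmat_sum_apply] at h
    simp only [add_sub_cancel_left, Matrix.zero_apply] at h
    exact sub_eq_zero.mp h
  have iter : ∀ m : ℕ, c (0, l) = c ((m : ZMod n) * l, l) := by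
    intro m
    induction m with
    | zero => simp
    | succ m ih =>
      have : (((m + 1 : ℕ)) : ZMod n) * l = (m : ZMod n) * l + l := by push_cast; ring
      rw [this]
      exact ih.trans (step _)
  have hk : (((k * l⁻¹).val : ℕ) : ZMod n) * l = k := by
    rw [ZMod.natCast_val, ZMod.cast_id, mul_assoc, inv_mul_cancel₀ hl, mul_one]
  rw [← hk, ← iter]

/-- Parametrization of the kernel. -/
noncomputable def Phi (n : ℕ) [NeZero n] :
    ((ZMod n → ℂ) × ({l : ZMod n // l ≠ 0} → ℂ)) →ₗ[ℂ] (ZMod n × ZMod n → ℂ) where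
  toFun ab := fun p => if h : p.2 = 0 then ab.1 p.1 else ab.2 ⟨p.2, h⟩
  map_add' ab ab' := by
    funext p
    by_cases h : p.2 = 0 <;> simp [h]
  map_smul' a ab := by
    funext p
    by_cases h : p.2 = 0 <;> simp [h]

theorem kernel_of_commutator_map {n : ℕ} [NeZero n] (hn : n.Prime) :
    (∀ c : ZMod n × ZMod n → ℂ,
        (∑ p : ZMod n × ZMod n, c p • Xmat n p.1 p.2) = 0 →
          ∀ l : ZMod n, l ≠ 0 → ∀ k : ZMod n, c (k, l) = c (0, l)) ∧
      Module.finrank ℂ (LinearMap.ker (XmatMap n)) = 2 * n - 1 := by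
  refine ⟨fun c hc l hl k => constancy hn c hc l hl k, ?_⟩
  have hrange : LinearMap.range (Phi n) = LinearMap.ker (XmatMap n) := by
    ext c
    constructor
    · rintro ⟨⟨a, b⟩, rfl⟩
      simp only [LinearMap.mem_ker, XmatMap, LinearMap.coe_mk, AddHom.coe_mk]
      ext i j
      rw [Xmat_sum_apply]
      simp only [Matrix.zero_apply, Phi, LinearMap.coe_mk, AddHom.coe_mk]
      by_cases h : j - i = 0
      · have hij : i = j := (sub_eq_zero.mp h).symm
        simp [h, hij]
      · simp [h]
    · intro hc
      have hc' : (∑ p : ZMod n × ZMod n, c p • Xmat n p.1 p.2) = 0 := hc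
      refine ⟨(fun k => c (k, 0), fun l => c (0, l.1)), ?_⟩
      funext p
      simp only [Phi, LinearMap.coe_mk, AddHom.coe_mk]
      by_cases h : p.2 = 0
      · rw [dif_pos h]; rw [show p = (p.1, p.2) from rfl, h]
      · rw [dif_neg h]
        exact (constancy hn c hc' p.2 h p.1).symm
  have hinj : Function.Injective (Phi n) := by
    intro ab ab' h
    obtain ⟨a, b⟩ := ab; obtain ⟨a', b'⟩ := ab'
    ext x
    · have := congrFun (show (Phi n) (a, b) = (Phi n) (a', b') from h) (x, 0)
      simpa [Phi] using this
    · have := congrFun (show (Phi n) (a, b) = (Phi n) (a', b') from h) (0, x.1)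
      simpa [Phi, x.2] using this
  rw [← hrange, LinearMap.finrank_range_of_inj hinj]
  haveI : Fact n.Prime := ⟨hn⟩
  rw [Module.finrank_prod, Module.finrank_pi, Module.finrank_pi]
  have hcard : Fintype.card {l : ZMod n // l ≠ 0} = n - 1 := by
    have h := Fintype.card_subtype_compl (fun l : ZMod n => l = 0)
    simp only [Fintype.card_subtype_eq, ZMod.card] at h
    exact h
  rw [ZMod.card, hcard]
  have h2 := hn.two_le
  omega
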